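/- Let n ≥ 4, let z_1, ..., z_n be pairwise distinct complex numbers, and consider the (2n)×(2n) block upper-triangular matrix M = [[Ã, B̃],[0, C̃]] where Ã is the n×n matrix whose i-th row is (1/∏_{k≠i}(z_i - z_k))·(1, z_i, ..., z_i^{n-4}) in the first n-3 columns, followed in the last 3 columns by (z_2 z_3, -(z_2+z_3), 1)/((z_2-z_1)(z_3-z_1)) for i=1, (z_1 z_3, -(z_1+z_3), 1)/((z_1-z_2)(z_3-z_2)) for i=2, (z_1 z_2, -(z_1+z_2), 1)/((z_1-z_3)(z_2-z_3)) for i=3, and zeros for i ≥ 4; and C̃ is the n×n matrix whose i-th row is (1/∏_{k≠i}(z_i - z_k))·(1, z_i, ..., z_i^{n-3}) in the first n-2 columns, followed in the last 2 columns by (z_2, -1)/(z_2-z_1) for i=1, (z_1, -1)/(z_1-z_2) for i=2, and zeros for i ≥ 3. Then det(Ã) = det(C̃), i.e. det(Ã)·det(C̃)^{-1} = 1. -/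

import Mathlib

open Polynomial Finset Matrix

/-- The matrix `Ã` from Appendix A: first `n-3` columns carry `z_i^{a-1}/∏_{k≠i}(z_i-z_k)`,
last three columns carry the inverse 3×3 Vandermonde rows for `z_1, z_2, z_3`. -/
noncomputable def Atilde (n : ℕ) (hn : 4 ≤ n) (z : Fin n → ℂ) :
    Matrix (Fin n) (Fin n) ℂ :=
  Matrix.of fun i j =>
    if (j : ℕ) < n - 3 then
      z i ^ (j : ℕ) / ∏ k ∈ Finset.univ.erase i, (z i - z k)
    else
      if (i : ℕ) = 0 then
        (if (j : ℕ) = n - 3 then z ⟨1, by omega⟩ * z ⟨2, by omega⟩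
          else if (j : ℕ) = n - 2 then -(z ⟨1, by omega⟩ + z ⟨2, by omega⟩) else 1) /
          ((z ⟨1, by omega⟩ - z ⟨0, by omega⟩) * (z ⟨2, by omega⟩ - z ⟨0, by omega⟩))
      else if (i : ℕ) = 1 then
        (if (j : ℕ) = n - 3 then z ⟨0, by omega⟩ * z ⟨2, by omega⟩
          else if (j : ℕ) = n - 2 then -(z ⟨0, by omega⟩ + z ⟨2, by omega⟩) else 1) /
          ((z ⟨0, by omega⟩ - z ⟨1, by omega⟩) * (z ⟨2, by omega⟩ - z ⟨1, by omega⟩))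
      else if (i : ℕ) = 2 then
        (if (j : ℕ) = n - 3 then z ⟨0, by omega⟩ * z ⟨1, by omega⟩
          else if (j : ℕ) = n - 2 then -(z ⟨0, by omega⟩ + z ⟨1, by omega⟩) else 1) /
          ((z ⟨0, by omega⟩ - z ⟨2, by omega⟩) * (z ⟨1, by omega⟩ - z ⟨2, by omega⟩))
      else 0

/-- The matrix `C̃` from Appendix A: first `n-2` columns carry `z_i^{b-1}/∏_{k≠i}(z_i-z_k)`,
last two columns carry the inverse 2×2 Vandermonde rows for `z_1, z_2`. -/
noncomputable def Ctilde (n : ℕ) (hn : 3 ≤ n) (z : Fin n → ℂ) :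
    Matrix (Fin n) (Fin n) ℂ :=
  Matrix.of fun i j =>
    if (j : ℕ) < n - 2 then
      z i ^ (j : ℕ) / ∏ k ∈ Finset.univ.erase i, (z i - z k)
    else
      if (i : ℕ) = 0 then
        (if (j : ℕ) = n - 2 then z ⟨1, by omega⟩ else -1) /
          (z ⟨1, by omega⟩ - z ⟨0, by omega⟩)
      else if (i : ℕ) = 1 then
        (if (j : ℕ) = n - 2 then z ⟨0, by omega⟩ else -1) /
          (z ⟨0, by omega⟩ - z ⟨1, by omega⟩)
      else 0


noncomputable section BerNS

namespace BerNS

variable (n : ℕ) (z : Fin n → ℂ)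

/-- indices `≥ m`. -/
def tl (m : ℕ) : Finset (Fin n) := Finset.univ.filter (fun k => m ≤ (k : ℕ))

/-- `∏_{k ≥ m} (X - z k)`. -/
def Q (m : ℕ) : Polynomial ℂ := ∏ k ∈ tl n m, (X - C (z k))

lemma card_tl (m : ℕ) : (tl n m).card = n - m := by
  classical
  have h : tl n m = Finset.image (fun j : Fin (n - m) => (⟨m + (j : ℕ), by omega⟩ : Fin n))
      Finset.univ := by
    ext k
    simp only [tl, Finset.mem_filter, Finset.mem_univ, true_and, Finset.mem_image]
    constructor
    · intro hk
      exact ⟨⟨(k : ℕ) - m, by omega⟩, by ext; simp; omega⟩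
    · rintro ⟨j, rfl⟩; simp
  rw [h, Finset.card_image_of_injective _ (fun a b hab => by
    have := congrArg Fin.val hab; simp at this; exact Fin.ext this)]
  simp

lemma monic_Q (m : ℕ) : (Q n z m).Monic :=
  monic_prod_of_monic _ _ fun k _ => monic_X_sub_C (z k)

lemma natDegree_Q (m : ℕ) : (Q n z m).natDegree = n - m := by
  rw [Q, natDegree_prod _ _ (fun k _ => X_sub_C_ne_zero (z k))]
  simp [card_tl]

lemma eval_Q (m : ℕ) (x : ℂ) : (Q n z m).eval x = ∏ k ∈ tl n m, (x - z k) := by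
  simp [Q, eval_prod]

lemma eval_Q_self (m : ℕ) (i : Fin n) (h : m ≤ (i : ℕ)) : (Q n z m).eval (z i) = 0 := by
  rw [eval_Q]
  exact Finset.prod_eq_zero (by simp [tl, h]) (sub_self _)

lemma eval_Q_ne (hz : Function.Injective z) (m : ℕ) (i : Fin n) (h : (i : ℕ) < m) : (Q n z m).eval (z i) ≠ 0 := by
  rw [eval_Q]
  refine Finset.prod_ne_zero_iff.2 fun k hk => sub_ne_zero_of_ne fun he => ?_
  have := hz he
  simp only [tl, Finset.mem_filter] at hk
  omega

/-- the common denominator. -/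
def d (i : Fin n) : ℂ := ∏ k ∈ Finset.univ.erase i, (z i - z k)

lemma d_ne (hz : Function.Injective z) (i : Fin n) : d n z i ≠ 0 := by
  refine Finset.prod_ne_zero_iff.2 fun k hk => sub_ne_zero_of_ne fun he => ?_
  exact (Finset.mem_erase.1 hk).1 (hz he).symm

end BerNS

namespace BerNS
variable (n : ℕ) (z : Fin n → ℂ) (hn : 4 ≤ n)

lemma erase0_3 : Finset.univ.erase (⟨0, by omega⟩ : Fin n)
    = insert ⟨1, by omega⟩ (insert ⟨2, by omega⟩ (tl n 3)) := by
  ext k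
  simp only [ne_eq, Finset.mem_erase, Finset.mem_univ, and_true, Finset.mem_insert, tl,
    Finset.mem_filter, true_and, Fin.ext_iff, Fin.val_mk]
  omega

lemma erase1_3 : Finset.univ.erase (⟨1, by omega⟩ : Fin n)
    = insert ⟨0, by omega⟩ (insert ⟨2, by omega⟩ (tl n 3)) := by
  ext k
  simp only [ne_eq, Finset.mem_erase, Finset.mem_univ, and_true, Finset.mem_insert, tl,
    Finset.mem_filter, true_and, Fin.ext_iff, Fin.val_mk]
  omega

lemma erase2_3 : Finset.univ.erase (⟨2, by omega⟩ : Fin n)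
    = insert ⟨0, by omega⟩ (insert ⟨1, by omega⟩ (tl n 3)) := by
  ext k
  simp only [ne_eq, Finset.mem_erase, Finset.mem_univ, and_true, Finset.mem_insert, tl,
    Finset.mem_filter, true_and, Fin.ext_iff, Fin.val_mk]
  omega

lemma erase0_2 : Finset.univ.erase (⟨0, by omega⟩ : Fin n)
    = insert ⟨1, by omega⟩ (tl n 2) := by
  ext k
  simp only [ne_eq, Finset.mem_erase, Finset.mem_univ, and_true, Finset.mem_insert, tl,
    Finset.mem_filter, true_and, Fin.ext_iff, Fin.val_mk]
  omega

lemma erase1_2 : Finset.univ.erase (⟨1, by omega⟩ : Fin n)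
    = insert ⟨0, by omega⟩ (tl n 2) := by
  ext k
  simp only [ne_eq, Finset.mem_erase, Finset.mem_univ, and_true, Finset.mem_insert, tl,
    Finset.mem_filter, true_and, Fin.ext_iff, Fin.val_mk]
  omega

lemma notmem_tl (a m : ℕ) (ha : a < m) (h : a < n) : (⟨a, h⟩ : Fin n) ∉ tl n m := by
  simp [tl]; omega

lemma d0_3 : d n z ⟨0, by omega⟩ =
    (z ⟨0, by omega⟩ - z ⟨1, by omega⟩) * ((z ⟨0, by omega⟩ - z ⟨2, by omega⟩) *
      (Q n z 3).eval (z ⟨0, by omega⟩)) := by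
  rw [d, erase0_3 n hn, Finset.prod_insert, Finset.prod_insert, eval_Q]
  · exact notmem_tl n 2 3 (by omega) (by omega)
  · simp only [Finset.mem_insert, Fin.ext_iff]
    push_neg
    exact ⟨by omega, notmem_tl n 1 3 (by omega) (by omega)⟩

lemma d1_3 : d n z ⟨1, by omega⟩ =
    (z ⟨1, by omega⟩ - z ⟨0, by omega⟩) * ((z ⟨1, by omega⟩ - z ⟨2, by omega⟩) *
      (Q n z 3).eval (z ⟨1, by omega⟩)) := by
  rw [d, erase1_3 n hn, Finset.prod_insert, Finset.prod_insert, eval_Q]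
  · exact notmem_tl n 2 3 (by omega) (by omega)
  · simp only [Finset.mem_insert, Fin.ext_iff]
    push_neg
    exact ⟨by omega, notmem_tl n 0 3 (by omega) (by omega)⟩

lemma d2_3 : d n z ⟨2, by omega⟩ =
    (z ⟨2, by omega⟩ - z ⟨0, by omega⟩) * ((z ⟨2, by omega⟩ - z ⟨1, by omega⟩) *
      (Q n z 3).eval (z ⟨2, by omega⟩)) := by
  rw [d, erase2_3 n hn, Finset.prod_insert, Finset.prod_insert, eval_Q]
  · exact notmem_tl n 1 3 (by omega) (by omega)
  · simp only [Finset.mem_insert, Fin.ext_iff]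
    push_neg
    exact ⟨by omega, notmem_tl n 0 3 (by omega) (by omega)⟩

lemma d0_2 : d n z ⟨0, by omega⟩ =
    (z ⟨0, by omega⟩ - z ⟨1, by omega⟩) * (Q n z 2).eval (z ⟨0, by omega⟩) := by
  rw [d, erase0_2 n hn, Finset.prod_insert, eval_Q]
  exact notmem_tl n 1 2 (by omega) (by omega)

lemma d1_2 : d n z ⟨1, by omega⟩ =
    (z ⟨1, by omega⟩ - z ⟨0, by omega⟩) * (Q n z 2).eval (z ⟨1, by omega⟩) := by
  rw [d, erase1_2 n hn, Finset.prod_insert, eval_Q]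
  exact notmem_tl n 0 2 (by omega) (by omega)

end BerNS

namespace BerNS
variable (n : ℕ) (z : Fin n → ℂ) (hn : 4 ≤ n)

/-- `z₀+z₁+z₂`. -/
def s3 : ℂ := z ⟨0, by omega⟩ + z ⟨1, by omega⟩ + z ⟨2, by omega⟩

/-- `z₀z₁+z₀z₂+z₁z₂`. -/
def e3 : ℂ := z ⟨0, by omega⟩ * z ⟨1, by omega⟩ + z ⟨0, by omega⟩ * z ⟨2, by omega⟩
    + z ⟨1, by omega⟩ * z ⟨2, by omega⟩

/-- quadratic `(x - (z₀+z₁+z₂)) x + (z₀z₁+z₀z₂+z₁z₂)`. -/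
def quad : Polynomial ℂ := (X - C (s3 n z hn)) * X + C (e3 n z hn)

lemma degree_aux : ((X - C (s3 n z hn)) * X : Polynomial ℂ).degree = 2 := by
  have m2 : Monic ((X - C (s3 n z hn)) * X) := (monic_X_sub_C _).mul monic_X
  rw [degree_eq_natDegree m2.ne_zero, (monic_X_sub_C _).natDegree_mul monic_X,
    natDegree_X_sub_C, natDegree_X]
  rfl

lemma monic_quad : (quad n z hn).Monic := by
  refine ((monic_X_sub_C _).mul monic_X).add_of_left ?_
  rw [degree_aux n z hn]
  exact lt_of_le_of_lt degree_C_le (by norm_num)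

lemma natDegree_quad : (quad n z hn).natDegree = 2 := by
  have h : (quad n z hn).degree = 2 := by
    rw [quad, degree_add_eq_left_of_degree_lt, degree_aux n z hn]
    rw [degree_aux n z hn]
    exact lt_of_le_of_lt degree_C_le (by norm_num)
  exact natDegree_eq_of_degree_eq_some h

end BerNS

namespace BerNS
variable (n : ℕ) (z : Fin n → ℂ) (hn : 4 ≤ n)

/-- polynomial giving column `j` of `Ã`. -/
def PA (j : Fin n) : Polynomial ℂ :=
  if (j : ℕ) < n - 3 then X ^ (j : ℕ)
  else if (j : ℕ) = n - 3 then quad n z hn * Q n z 3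
  else if (j : ℕ) = n - 2 then (X - C (s3 n z hn)) * Q n z 3
  else Q n z 3

/-- polynomial giving column `j` of `C̃`. -/
def PC (j : Fin n) : Polynomial ℂ :=
  if (j : ℕ) < n - 2 then X ^ (j : ℕ)
  else if (j : ℕ) = n - 2 then
    (X - C (z ⟨0, by omega⟩ + z ⟨1, by omega⟩)) * Q n z 2
  else Q n z 2

lemma natDegree_PA_lt (j : Fin n) : (PA n z hn j).natDegree < n := by
  rw [PA]
  split_ifs with h1 h2 h3
  · rw [natDegree_X_pow]; omega
  · rw [(monic_quad n z hn).natDegree_mul (monic_Q n z 3), natDegree_quad, natDegree_Q]; omega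
  · rw [(monic_X_sub_C _).natDegree_mul (monic_Q n z 3), natDegree_X_sub_C, natDegree_Q]; omega
  · rw [natDegree_Q]; omega

lemma natDegree_PC_lt (j : Fin n) : (PC n z hn j).natDegree < n := by
  rw [PC]
  split_ifs with h1 h2
  · rw [natDegree_X_pow]; omega
  · rw [(monic_X_sub_C _).natDegree_mul (monic_Q n z 2), natDegree_X_sub_C, natDegree_Q]; omega
  · rw [natDegree_Q]; omega

/-- the Cauchy-type matrix with full power rows. -/
def Nm : Matrix (Fin n) (Fin n) ℂ := Matrix.of fun i k => z i ^ (k : ℕ) / d n z i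

/-- coefficient matrices. -/
def TA : Matrix (Fin n) (Fin n) ℂ := Matrix.of fun k j => (PA n z hn j).coeff (k : ℕ)

def TC : Matrix (Fin n) (Fin n) ℂ := Matrix.of fun k j => (PC n z hn j).coeff (k : ℕ)

lemma mul_coeff_apply (P : Fin n → Polynomial ℂ) (hP : ∀ j, (P j).natDegree < n) (i j : Fin n) :
    (Nm n z * Matrix.of fun (k j : Fin n) => (P j).coeff (k : ℕ)) i j = (P j).eval (z i) / d n z i := by
  rw [Matrix.mul_apply]
  simp only [Nm, Matrix.of_apply]
  rw [eval_eq_sum_range' (hP j)]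
  rw [Finset.sum_div]
  rw [← Fin.sum_univ_eq_sum_range (fun k => (P j).coeff k * z i ^ k / d n z i)]
  exact Finset.sum_congr rfl fun k _ => by ring

end BerNS

namespace BerNS
variable (n : ℕ) (z : Fin n → ℂ) (hn : 4 ≤ n) (hz : Function.Injective z)

lemma zsub_ne (hz : Function.Injective z) (a b : Fin n) (h : a ≠ b) : z a - z b ≠ 0 :=
  sub_ne_zero_of_ne fun he => h (hz he)

lemma Atilde_factor (hz : Function.Injective z) : Atilde n hn z = Nm n z * TA n z hn := by
  ext i j
  rw [TA, mul_coeff_apply n z _ (natDegree_PA_lt n z hn) i j]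
  have hne : ∀ (a b : ℕ) (ha : a < n) (hb : b < n), a ≠ b →
      z ⟨a, ha⟩ - z ⟨b, hb⟩ ≠ 0 := fun a b ha hb hab =>
    zsub_ne n z hz _ _ (by simp [Fin.ext_iff]; omega)
  by_cases hj : (j : ℕ) < n - 3
  · simp only [Atilde, Matrix.of_apply, if_pos hj, PA, d]
    simp
  · by_cases hi3 : 3 ≤ (i : ℕ)
    · have h0 : ¬ (i : ℕ) = 0 := by omega
      have h1 : ¬ (i : ℕ) = 1 := by omega
      have h2 : ¬ (i : ℕ) = 2 := by omega
      simp only [Atilde, Matrix.of_apply, if_neg hj, if_neg h0, if_neg h1, if_neg h2, PA]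
      have hQ : (Q n z 3).eval (z i) = 0 := eval_Q_self n z 3 i hi3
      split_ifs with h3 h4 <;> simp [eval_mul, hQ]
    · rcases (by omega : (i : ℕ) = 0 ∨ (i : ℕ) = 1 ∨ (i : ℕ) = 2) with hi | hi | hi
      · have hieq : i = ⟨0, by omega⟩ := Fin.ext hi
        rw [hieq]
        have hQ := eval_Q_ne n z hz 3 ⟨0, by omega⟩ (by norm_num)
        simp only [Atilde, Matrix.of_apply, if_neg hj, PA, Fin.val_mk, if_pos rfl]
        rw [d0_3 n z hn]
        split_ifs with h3 h4 <;>
        · try simp only [eval_mul, eval_sub, eval_add, eval_X, eval_C, quad, s3, e3]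
          have e01 := hne 0 1 (by omega) (by omega) (by omega)
          have e02 := hne 0 2 (by omega) (by omega) (by omega)
          have e10 := hne 1 0 (by omega) (by omega) (by omega)
          have e20 := hne 2 0 (by omega) (by omega) (by omega)
          field_simp
          ring
      · have hieq : i = ⟨1, by omega⟩ := Fin.ext hi
        rw [hieq]
        have hQ := eval_Q_ne n z hz 3 ⟨1, by omega⟩ (by norm_num)
        simp only [Atilde, Matrix.of_apply, if_neg hj, PA, Fin.val_mk, if_pos rfl]
        rw [d1_3 n z hn]
        norm_num
        split_ifs with h3 h4 <;>
        · try simp only [eval_mul, eval_sub, eval_add, eval_X, eval_C, quad, s3, e3]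
          have e01 := hne 0 1 (by omega) (by omega) (by omega)
          have e12 := hne 1 2 (by omega) (by omega) (by omega)
          have e10 := hne 1 0 (by omega) (by omega) (by omega)
          have e21 := hne 2 1 (by omega) (by omega) (by omega)
          field_simp
          ring
      · have hieq : i = ⟨2, by omega⟩ := Fin.ext hi
        rw [hieq]
        have hQ := eval_Q_ne n z hz 3 ⟨2, by omega⟩ (by norm_num)
        simp only [Atilde, Matrix.of_apply, if_neg hj, PA, Fin.val_mk, if_pos rfl]
        rw [d2_3 n z hn]
        norm_num
        split_ifs with h3 h4 <;>
        · try simp only [eval_mul, eval_sub, eval_add, eval_X, eval_C, quad, s3, e3]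
          have e02 := hne 0 2 (by omega) (by omega) (by omega)
          have e12 := hne 1 2 (by omega) (by omega) (by omega)
          have e20 := hne 2 0 (by omega) (by omega) (by omega)
          have e21 := hne 2 1 (by omega) (by omega) (by omega)
          field_simp
          ring

end BerNS

namespace BerNS
variable (n : ℕ) (z : Fin n → ℂ) (hn : 4 ≤ n)

lemma Ctilde_factor (hz : Function.Injective z) :
    Ctilde n (Nat.le_of_succ_le hn) z = Nm n z * TC n z hn := by
  ext i j
  rw [TC, mul_coeff_apply n z _ (natDegree_PC_lt n z hn) i j]
  have hne : ∀ (a b : ℕ) (ha : a < n) (hb : b < n), a ≠ b →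
      z ⟨a, ha⟩ - z ⟨b, hb⟩ ≠ 0 := fun a b ha hb hab =>
    zsub_ne n z hz _ _ (by simp [Fin.ext_iff]; omega)
  by_cases hj : (j : ℕ) < n - 2
  · simp only [Ctilde, Matrix.of_apply, if_pos hj, PC, d]
    simp
  · by_cases hi2 : 2 ≤ (i : ℕ)
    · have h0 : ¬ (i : ℕ) = 0 := by omega
      have h1 : ¬ (i : ℕ) = 1 := by omega
      simp only [Ctilde, Matrix.of_apply, if_neg hj, if_neg h0, if_neg h1, PC]
      have hQ : (Q n z 2).eval (z i) = 0 := eval_Q_self n z 2 i hi2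
      split_ifs with h3 <;> simp [eval_mul, hQ]
    · rcases (by omega : (i : ℕ) = 0 ∨ (i : ℕ) = 1) with hi | hi
      · have hieq : i = ⟨0, by omega⟩ := Fin.ext hi
        rw [hieq]
        have hQ := eval_Q_ne n z hz 2 ⟨0, by omega⟩ (by norm_num)
        simp only [Ctilde, Matrix.of_apply, if_neg hj, PC, Fin.val_mk, if_pos rfl]
        rw [d0_2 n z hn]
        split_ifs with h3 <;>
        · try simp only [eval_mul, eval_sub, eval_add, eval_X, eval_C]
          have e01 := hne 0 1 (by omega) (by omega) (by omega)
          have e10 := hne 1 0 (by omega) (by omega) (by omega)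
          field_simp
          ring
      · have hieq : i = ⟨1, by omega⟩ := Fin.ext hi
        rw [hieq]
        have hQ := eval_Q_ne n z hz 2 ⟨1, by omega⟩ (by norm_num)
        simp only [Ctilde, Matrix.of_apply, if_neg hj, PC, Fin.val_mk, if_pos rfl]
        rw [d1_2 n z hn]
        norm_num
        split_ifs with h3 <;>
        · try simp only [eval_mul, eval_sub, eval_add, eval_X, eval_C]
          have e01 := hne 0 1 (by omega) (by omega) (by omega)
          have e10 := hne 1 0 (by omega) (by omega) (by omega)
          field_simp
          ring

end BerNS

namespace BerNS
variable (n : ℕ) (z : Fin n → ℂ) (hn : 4 ≤ n)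

lemma nd_PA1 : ((X - C (s3 n z hn)) * Q n z 3).natDegree = n - 2 := by
  rw [(monic_X_sub_C _).natDegree_mul (monic_Q n z 3), natDegree_X_sub_C, natDegree_Q]; omega

lemma nd_PA2 : (quad n z hn * Q n z 3).natDegree = n - 1 := by
  rw [(monic_quad n z hn).natDegree_mul (monic_Q n z 3), natDegree_quad, natDegree_Q]; omega

lemma det_TA : (TA n z hn).det = -1 := by
  have h31 : (⟨n - 3, by omega⟩ : Fin n) ≠ ⟨n - 1, by omega⟩ := by
    simp [Fin.ext_iff]; omega
  set σ : Equiv.Perm (Fin n) := Equiv.swap ⟨n - 3, by omega⟩ ⟨n - 1, by omega⟩ with hσ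
  have htri : ((TA n z hn).submatrix id σ).BlockTriangular id := by
    intro a b hab
    have hab' : (b : ℕ) < (a : ℕ) := hab
    simp only [Matrix.submatrix_apply, id_eq, TA, Matrix.of_apply]
    by_cases hb : (b : ℕ) < n - 3
    · have hσb : σ b = b := Equiv.swap_apply_of_ne_of_ne
        (by simp [Fin.ext_iff]; omega) (by simp [Fin.ext_iff]; omega)
      rw [hσb, PA, if_pos hb, coeff_X_pow, if_neg (by omega)]
    · rcases (by omega : (b : ℕ) = n - 3 ∨ (b : ℕ) = n - 2 ∨ (b : ℕ) = n - 1)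
        with h | h | h
      · have hbeq : b = ⟨n - 3, by omega⟩ := Fin.ext h
        rw [hbeq, hσ, Equiv.swap_apply_left, PA]
        simp only [Fin.val_mk]
        rw [if_neg (by omega), if_neg (by omega), if_neg (by omega)]
        exact coeff_eq_zero_of_natDegree_lt (by rw [natDegree_Q]; omega)
      · have hσb : σ b = b := Equiv.swap_apply_of_ne_of_ne
          (by simp [Fin.ext_iff]; omega) (by simp [Fin.ext_iff]; omega)
        rw [hσb, PA, if_neg (by omega), if_neg (by omega), if_pos h]
        exact coeff_eq_zero_of_natDegree_lt (by rw [nd_PA1]; omega)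
      · exact absurd a.isLt (by omega)
  have hdiag : ∀ j : Fin n, ((TA n z hn).submatrix id σ) j j = 1 := by
    intro j
    simp only [Matrix.submatrix_apply, id_eq, TA, Matrix.of_apply]
    by_cases hb : (j : ℕ) < n - 3
    · have hσb : σ j = j := Equiv.swap_apply_of_ne_of_ne
        (by simp [Fin.ext_iff]; omega) (by simp [Fin.ext_iff]; omega)
      rw [hσb, PA, if_pos hb, coeff_X_pow, if_pos rfl]
    · rcases (by omega : (j : ℕ) = n - 3 ∨ (j : ℕ) = n - 2 ∨ (j : ℕ) = n - 1)
        with h | h | h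
      · have hbeq : j = ⟨n - 3, by omega⟩ := Fin.ext h
        rw [hbeq, hσ, Equiv.swap_apply_left, PA]
        simp only [Fin.val_mk]
        rw [if_neg (by omega), if_neg (by omega), if_neg (by omega)]
        have := (monic_Q n z 3).coeff_natDegree
        rwa [natDegree_Q] at this
      · have hσb : σ j = j := Equiv.swap_apply_of_ne_of_ne
          (by simp [Fin.ext_iff]; omega) (by simp [Fin.ext_iff]; omega)
        rw [hσb, PA, if_neg (by omega), if_neg (by omega), if_pos h]
        have := ((monic_X_sub_C (s3 n z hn)).mul (monic_Q n z 3)).coeff_natDegree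
        rwa [nd_PA1, ← h] at this
      · have hbeq : j = ⟨n - 1, by omega⟩ := Fin.ext h
        rw [hbeq, hσ, Equiv.swap_apply_right, PA]
        simp only [Fin.val_mk]
        rw [if_neg (by omega), if_pos trivial]
        have := ((monic_quad n z hn).mul (monic_Q n z 3)).coeff_natDegree
        rwa [nd_PA2, ← h, hbeq] at this
  have h1 : ((TA n z hn).submatrix id σ).det = 1 := by
    rw [Matrix.det_of_upperTriangular htri]
    exact Finset.prod_eq_one fun j _ => hdiag j
  rw [Matrix.det_permute', hσ, Equiv.Perm.sign_swap h31] at h1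
  simp only [Equiv.Perm.sign_swap h31, Units.val_neg, Units.val_one, Int.cast_neg,
    Int.cast_one, neg_mul, one_mul, neg_eq_iff_eq_neg] at h1
  linear_combination h1

end BerNS

namespace BerNS
variable (n : ℕ) (z : Fin n → ℂ) (hn : 4 ≤ n)

lemma nd_PC1 : ((X - C (z ⟨0, by omega⟩ + z ⟨1, by omega⟩)) * Q n z 2).natDegree = n - 1 := by
  rw [(monic_X_sub_C _).natDegree_mul (monic_Q n z 2), natDegree_X_sub_C, natDegree_Q]; omega

lemma det_TC : (TC n z hn).det = -1 := by
  have h31 : (⟨n - 2, by omega⟩ : Fin n) ≠ ⟨n - 1, by omega⟩ := by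
    simp [Fin.ext_iff]; omega
  set σ : Equiv.Perm (Fin n) := Equiv.swap ⟨n - 2, by omega⟩ ⟨n - 1, by omega⟩ with hσ
  have htri : ((TC n z hn).submatrix id σ).BlockTriangular id := by
    intro a b hab
    have hab' : (b : ℕ) < (a : ℕ) := hab
    simp only [Matrix.submatrix_apply, id_eq, TC, Matrix.of_apply]
    by_cases hb : (b : ℕ) < n - 2
    · have hσb : σ b = b := Equiv.swap_apply_of_ne_of_ne
        (by simp [Fin.ext_iff]; omega) (by simp [Fin.ext_iff]; omega)
      rw [hσb, PC, if_pos hb, coeff_X_pow, if_neg (by omega)]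
    · rcases (by omega : (b : ℕ) = n - 2 ∨ (b : ℕ) = n - 1) with h | h
      · have hbeq : b = ⟨n - 2, by omega⟩ := Fin.ext h
        rw [hbeq, hσ, Equiv.swap_apply_left, PC]
        simp only [Fin.val_mk]
        rw [if_neg (by omega), if_neg (by omega)]
        exact coeff_eq_zero_of_natDegree_lt (by rw [natDegree_Q]; omega)
      · exact absurd a.isLt (by omega)
  have hdiag : ∀ j : Fin n, ((TC n z hn).submatrix id σ) j j = 1 := by
    intro j
    simp only [Matrix.submatrix_apply, id_eq, TC, Matrix.of_apply]
    by_cases hb : (j : ℕ) < n - 2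
    · have hσb : σ j = j := Equiv.swap_apply_of_ne_of_ne
        (by simp [Fin.ext_iff]; omega) (by simp [Fin.ext_iff]; omega)
      rw [hσb, PC, if_pos hb, coeff_X_pow, if_pos rfl]
    · rcases (by omega : (j : ℕ) = n - 2 ∨ (j : ℕ) = n - 1) with h | h
      · have hbeq : j = ⟨n - 2, by omega⟩ := Fin.ext h
        rw [hbeq, hσ, Equiv.swap_apply_left, PC]
        simp only [Fin.val_mk]
        rw [if_neg (by omega), if_neg (by omega)]
        have := (monic_Q n z 2).coeff_natDegree
        rwa [natDegree_Q, ← h, hbeq] at this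
      · have hbeq : j = ⟨n - 1, by omega⟩ := Fin.ext h
        rw [hbeq, hσ, Equiv.swap_apply_right, PC]
        simp only [Fin.val_mk]
        rw [if_neg (by omega), if_pos trivial]
        have := ((monic_X_sub_C (z ⟨0, by omega⟩ + z ⟨1, by omega⟩)).mul
          (monic_Q n z 2)).coeff_natDegree
        rwa [nd_PC1 n z hn] at this
  have h1 : ((TC n z hn).submatrix id σ).det = 1 := by
    rw [Matrix.det_of_upperTriangular htri]
    exact Finset.prod_eq_one fun j _ => hdiag j
  rw [Matrix.det_permute', hσ, Equiv.Perm.sign_swap h31] at h1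
  simp only [Units.val_neg, Units.val_one, Int.cast_neg,
    Int.cast_one, neg_mul, one_mul, neg_eq_iff_eq_neg] at h1
  linear_combination h1

end BerNS

/-- `det Ã = det C̃`, i.e. the Berezinian of the transition matrix `M = [[Ã,B̃],[0,C̃]]`
equals `1`. -/
theorem det_Atilde_eq_det_Ctilde (n : ℕ) (hn : 4 ≤ n) (z : Fin n → ℂ)
    (hz : Function.Injective z) :
    (Atilde n hn z).det = (Ctilde n (by omega) z).det := by
  rw [BerNS.Atilde_factor n z hn hz, BerNS.Ctilde_factor n z hn hz,
    Matrix.det_mul, Matrix.det_mul, BerNS.det_TA, BerNS.det_TC]
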